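/- Let k be an infinite field of characteristic p > 0, q = p^e with q + 1 ≥ n + 1 ≥ 4, and let f ∈ k[x_0, x_1, ..., x_n] be a homogeneous polynomial of degree q+1 such that for every nonzero linear form L, the image of f in k[x_0, ..., x_n]/⟨L⟩ lies in the ideal generated by the q-th powers of the variables (i.e., every hyperplane section is a Frobenius form). Then f itself is a Frobenius form, i.e., f ∈ ⟨x_0^q, x_1^q, ..., x_n^q⟩. -/

import Mathlib

open MvPolynomial

lemma prod_monomial_one_aux {σ R : Type*} [CommSemiring R] (s : Finset σ) (g : σ → σ →₀ ℕ) :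
    (∏ l ∈ s, (monomial (g l) (1 : R))) = monomial (∑ l ∈ s, g l) 1 := by
  classical
  induction s using Finset.cons_induction with
  | empty => simp
  | cons a s ha ih =>
      rw [Finset.prod_cons, ih, Finset.sum_cons, monomial_mul, one_mul]

/-- If every hyperplane section of a degree `q+1` hypersurface is a Frobenius form
(`k` infinite, `q = pᵉ`, `q + 1 ≥ n + 1 ≥ 4`), then the defining form is itself a Frobenius
form. Membership of the image of `f` in `k[x₀,…,xₙ]/⟨L⟩` in the ideal generated by the `q`-th
powers of the variables is expressed as `f ∈ ⟨L⟩ + ⟨x₀^q, …, xₙ^q⟩`. -/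
theorem stmt16 {k : Type*} [Field k] [Infinite k] (p : ℕ) [Fact p.Prime] [CharP k p]
    {n : ℕ} (e : ℕ) (hn : 3 ≤ n) (hq : n ≤ p ^ e)
    (f : MvPolynomial (Fin (n + 1)) k) (hf : f.IsHomogeneous (p ^ e + 1))
    (hsec : ∀ L : MvPolynomial (Fin (n + 1)) k, L.IsHomogeneous 1 → L ≠ 0 →
      f ∈ Ideal.span ({L} ∪ Set.range fun i : Fin (n + 1) =>
        (X i : MvPolynomial (Fin (n + 1)) k) ^ p ^ e)) :
    f ∈ Ideal.span (Set.range fun i : Fin (n + 1) =>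
      (X i : MvPolynomial (Fin (n + 1)) k) ^ p ^ e) := by
  classical
  set q := p ^ e with hqdef
  have hq1 : 1 ≤ q := Nat.one_le_pow _ _ (Fact.out (p := p.Prime)).pos
  set lst := Fin.last n with hlst
  -- membership criterion for the monomial ideal
  have hcrit : ∀ g : MvPolynomial (Fin (n + 1)) k,
      g ∈ Ideal.span (Set.range fun i : Fin (n + 1) =>
        (X i : MvPolynomial (Fin (n + 1)) k) ^ q) ↔
      ∀ d ∈ g.support, ∃ l, q ≤ d l := by
    intro g
    have hfun : (fun i : Fin (n + 1) => (X i : MvPolynomial (Fin (n + 1)) k) ^ q)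
        = (fun s => monomial s (1 : k)) ∘ (fun i : Fin (n + 1) => Finsupp.single i q) := by
      funext i
      simp [X_pow_eq_monomial, Function.comp]
    rw [hfun, Set.range_comp, mem_ideal_span_monomial_image]
    constructor
    · intro h d hd
      obtain ⟨s, ⟨i, rfl⟩, hle⟩ := h d hd
      exact ⟨i, Finsupp.single_le_iff.mp hle⟩
    · intro h d hd
      obtain ⟨i, hi⟩ := h d hd
      exact ⟨Finsupp.single i q, ⟨i, rfl⟩, Finsupp.single_le_iff.mpr hi⟩
  -- key vanishing lemma
  have key : ∀ i : Fin (n + 1), i ≠ lst → ∀ d₀ : Fin (n + 1) →₀ ℕ, d₀ ∈ f.support →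
      (∀ l, d₀ l < q) → d₀ i + d₀ lst < q → False := by
    intro i hi d₀ hd₀ hlt hilt
    set τ : (Fin (n + 1) →₀ ℕ) → (Fin (n + 1) →₀ ℕ) :=
      fun d => d.update lst 0 + Finsupp.single i (d lst) with hτdef
    have hτ : ∀ (d : Fin (n + 1) →₀ ℕ) (l : Fin (n + 1)),
        τ d l = if l = lst then 0 else if l = i then d i + d lst else d l := by
      intro d l
      simp only [hτdef, Finsupp.add_apply, Finsupp.coe_update, Finsupp.single_apply]
      by_cases h1 : l = lst
      · subst h1
        simp [Function.update_apply, hi]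
      · by_cases h2 : l = i
        · subst h2
          simp [Function.update_apply, h1]
        · have h2' : ¬ i = l := fun h => h2 h.symm
          simp [Function.update_apply, h1, h2, h2']
    set μ := τ d₀ with hμ
    have hμlt : ∀ l, μ l < q := by
      intro l
      rw [hμ, hτ]
      split_ifs with h1 h2
      · exact hq1
      · subst h2; exact hilt
      · exact hlt l
    -- the substitution
    set v : k → Fin (n + 1) → MvPolynomial (Fin (n + 1)) k :=
      fun t l => if l = lst then C t * X i else X l with hv
    have hmem : ∀ t : k, (aeval (v t)) f ∈ Ideal.span
        (Set.range fun i : Fin (n + 1) => (X i : MvPolynomial (Fin (n + 1)) k) ^ q) := by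
      intro t
      have hL : (X lst - C t * X i : MvPolynomial (Fin (n + 1)) k).IsHomogeneous 1 := by
        apply (isHomogeneous_X _ _).sub
        simpa using (isHomogeneous_C _ t).mul (isHomogeneous_X k i)
      have hLne : (X lst - C t * X i : MvPolynomial (Fin (n + 1)) k) ≠ 0 := by
        intro h
        have h2 := congrArg (coeff (Finsupp.single lst 1)) h
        have hne : ¬ (Finsupp.single i 1 = Finsupp.single lst (1:ℕ)) := by
          intro h3
          exact hi (by simpa using (Finsupp.single_left_injective one_ne_zero) h3)
        simp [coeff_X', hne] at h2
      have h1 : aeval (v t) f ∈ Ideal.map (aeval (v t))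
          (Ideal.span ({X lst - C t * X i} ∪ Set.range fun i : Fin (n + 1) =>
            (X i : MvPolynomial (Fin (n + 1)) k) ^ q)) :=
        Ideal.mem_map_of_mem _ (hsec _ hL hLne)
      rw [Ideal.map_span] at h1
      refine Ideal.span_le.mpr ?_ h1
      rintro _ ⟨x, hx, rfl⟩
      rcases hx with hx | ⟨j, rfl⟩
      · rw [Set.mem_singleton_iff] at hx; subst hx
        have hz : aeval (v t) (X lst - C t * X i : MvPolynomial (Fin (n + 1)) k) = 0 := by
          simp [hv, hi]
        rw [hz]; exact Ideal.zero_mem _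
      · simp only [map_pow, aeval_X]
        by_cases hj : j = lst
        · subst hj
          simp only [hv, if_pos rfl, mul_pow]
          exact Ideal.mul_mem_left _ _ (Ideal.subset_span ⟨i, rfl⟩)
        · simp only [hv, if_neg hj]
          exact Ideal.subset_span ⟨j, rfl⟩
    -- the explicit form of the substituted polynomial
    have hform : ∀ t : k, (aeval (v t)) f
        = ∑ d ∈ f.support, monomial (τ d) (coeff d f * t ^ d lst) := by
      intro t
      conv_lhs => rw [f.as_sum]
      rw [map_sum]
      refine Finset.sum_congr rfl fun d _ => ?_
      rw [aeval_monomial, Finsupp.prod_fintype _ _ (fun _ => pow_zero _),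
        ← Finset.mul_prod_erase Finset.univ _ (Finset.mem_univ lst)]
      have h1 : ∀ l ∈ Finset.univ.erase lst,
          (v t l) ^ d l = monomial (Finsupp.single l (d l)) (1 : k) := by
        intro l hl
        rw [hv]
        simp [(Finset.mem_erase.mp hl).1, X_pow_eq_monomial]
      rw [Finset.prod_congr rfl h1, prod_monomial_one_aux]
      have h2 : (v t lst) ^ d lst = monomial (Finsupp.single i (d lst)) (t ^ d lst) := by
        rw [hv]
        simp only [if_pos rfl, if_true, eq_self_iff_true, mul_pow, ← C_pow,
          X_pow_eq_monomial, C_mul_monomial, mul_one]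
      rw [h2]
      have h3 : d.update lst 0 = ∑ l ∈ Finset.univ.erase lst, Finsupp.single l (d l) := by
        ext m
        rw [Finsupp.finset_sum_apply]
        simp only [Finsupp.coe_update, Finsupp.single_apply]
        by_cases hm : m = lst
        · subst hm
          simp [Function.update_apply]
        · rw [Finset.sum_eq_single m]
          · simp [Function.update_apply, hm]
          · intro b _ hb
            simp [hb]
          · intro hmem'
            simp [Finset.mem_erase, hm] at hmem'
      rw [monomial_mul, algebraMap_eq, C_mul_monomial, mul_one]
      have h4 : (Finsupp.single i (d lst)) + ∑ l ∈ Finset.univ.erase lst,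
          (Finsupp.single l (d l) : Fin (n + 1) →₀ ℕ) = τ d := by
        rw [hτdef]
        dsimp only
        rw [← h3]
        exact add_comm _ _
      rw [h4]
    -- coefficient of μ vanishes for all t
    have hzero : ∀ t : k, coeff μ ((aeval (v t)) f) = 0 := by
      intro t
      by_contra h
      obtain ⟨l, hl⟩ := (hcrit _).mp (hmem t) μ (mem_support_iff.mpr h)
      exact absurd hl (not_le.mpr (hμlt l))
    -- package into a one-variable polynomial in t
    set P : Polynomial k := ∑ d ∈ f.support,
      if τ d = μ then Polynomial.C (coeff d f) * Polynomial.X ^ (d lst) else 0 with hP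
    have heval : ∀ t : k, P.eval t = coeff μ ((aeval (v t)) f) := by
      intro t
      rw [hform t, coeff_sum, hP, Polynomial.eval_finset_sum]
      refine Finset.sum_congr rfl fun d _ => ?_
      rw [coeff_monomial]
      split_ifs with h
      · simp
      · simp
    have hP0 : P = 0 := by
      apply Polynomial.zero_of_eval_zero
      intro t
      rw [heval t, hzero t]
    -- injectivity on the fiber
    have hinj : ∀ d : Fin (n + 1) →₀ ℕ, τ d = μ → d lst = d₀ lst → d = d₀ := by
      intro d h1 h2
      ext l
      have h3 := congrArg (fun g : Fin (n + 1) →₀ ℕ => g l) h1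
      simp only [hμ, hτ] at h3
      by_cases hl1 : l = lst
      · subst hl1; exact h2
      · by_cases hl2 : l = i
        · subst hl2
          rw [if_neg hl1, if_pos rfl, if_neg hl1, if_pos rfl] at h3
          omega
        · simpa [hl1, hl2] using h3
    -- extract the coefficient
    have hcoeff : P.coeff (d₀ lst) = coeff d₀ f := by
      rw [hP, Polynomial.finset_sum_coeff]
      rw [Finset.sum_eq_single_of_mem d₀ hd₀]
      · rw [if_pos rfl, Polynomial.coeff_C_mul, Polynomial.coeff_X_pow, if_pos rfl, mul_one]
      · intro d _ hne
        split_ifs with h1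
        · rw [Polynomial.coeff_C_mul, Polynomial.coeff_X_pow]
          have : ¬ (d₀ lst = d lst) := fun h2 => hne (hinj d h1 h2.symm)
          rw [if_neg this, mul_zero]
        · simp
    rw [hP0] at hcoeff
    simp only [Polynomial.coeff_zero] at hcoeff
    exact (mem_support_iff.mp hd₀) hcoeff.symm
  -- main argument
  rw [hcrit]
  intro d hd
  by_contra h
  push_neg at h
  -- degree of d is q + 1
  have hdeg : ∑ l : Fin (n + 1), d l = q + 1 := by
    have h1 : (Finsupp.weight 1) d = q + 1 := hf (mem_support_iff.mp hd)
    rw [show (1 : Fin (n + 1) → ℕ) = fun _ => 1 from rfl, ← Finsupp.degree_eq_weight_one] at h1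
    rw [← h1, Finsupp.degree]
    exact (Finset.sum_subset (Finset.subset_univ _)
      (fun x _ hx => Finsupp.notMem_support_iff.mp hx)).symm
  by_cases hA : ∃ i : Fin (n + 1), i ≠ lst ∧ d i + d lst < q
  · obtain ⟨i, hi, hilt⟩ := hA
    exact key i hi d hd h hilt
  · push_neg at hA
    -- every variable exponent is big: degree too large
    have hsplit : ∑ l : Fin (n + 1), d l
        = d lst + ∑ l ∈ Finset.univ.erase lst, d l := by
      rw [Finset.add_sum_erase Finset.univ _ (Finset.mem_univ lst)]
    have hbound : n * (q - d lst) ≤ ∑ l ∈ Finset.univ.erase lst, d l := by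
      have hcard : (Finset.univ.erase lst).card = n := by
        rw [Finset.card_erase_of_mem (Finset.mem_univ lst), Finset.card_univ, Fintype.card_fin]
        rfl
      have hle := Finset.card_nsmul_le_sum (Finset.univ.erase lst) (fun l => d l)
        (q - d lst) (fun l hl => by
          have := hA l (Finset.mem_erase.mp hl).1
          show q - d lst ≤ d l
          omega)
      rw [hcard] at hle
      simpa [smul_eq_mul] using hle
    have h3 : 3 * (q - d lst) ≤ n * (q - d lst) := Nat.mul_le_mul_right _ hn
    have h4 : 3 * (q - d lst) ≤ ∑ l ∈ Finset.univ.erase lst, d l := le_trans h3 hbound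
    have hlast : d lst < q := h lst
    omega
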